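/- For the cyclic edge perturbation on the odd circle Z/(2l+1)Z with g(x) = x−1: the kernel \tilde{K}(x,y) = K(x, g^{-1}y) has invariant probability measure \tilde{π} given by \tilde{π}(x) = 2(1+ε)/(ε²+2Nε+2N) for x ≠ 0,1, \tilde{π}(0) = (ε+1)(ε+2)/(ε²+2Nε+2N), \tilde{π}(1) = (ε+2)/(ε²+2Nε+2N), where N = 2l+1; consequently max \tilde{π} ≤ (1+ε) min \tilde{π}. -/
import Mathlib


open BigOperators Finset

def tilde {V : Type*} [Fintype V] (K : Matrix V V ℝ) (g : Equiv.Perm V) : Matrix V V ℝ :=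
  Matrix.of fun x y => K x (g.symm y)

/-- The cyclic edge perturbation kernel (5.1) on the circle Z/NZ: simple random walk
with the edge (0,1) given weight 1+ε. -/
noncomputable def Kcirc (N : ℕ) (ε : ℝ) : Matrix (ZMod N) (ZMod N) ℝ :=
  Matrix.of fun x y =>
    if (x = 0 ∧ y = 1) ∨ (x = 1 ∧ y = 0) then (1 + ε) / (2 + ε)
    else if (x = 0 ∧ y = -1) ∨ (x = 1 ∧ y = 2) then 1 / (2 + ε)
    else if y = x + 1 ∨ y = x - 1 then 1 / 2
    else 0

lemma Kc_half {N : ℕ} {ε : ℝ} {x y : ZMod N} (hx0 : x ≠ 0) (hx1 : x ≠ 1)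
    (hy : y = x + 1 ∨ y = x - 1) : Kcirc N ε x y = 1 / 2 := by
  unfold Kcirc
  rw [Matrix.of_apply]
  rw [if_neg (by rintro (⟨h, -⟩ | ⟨h, -⟩); exacts [hx0 h, hx1 h]),
      if_neg (by rintro (⟨h, -⟩ | ⟨h, -⟩); exacts [hx0 h, hx1 h]),
      if_pos hy]

lemma Kc_zero {N : ℕ} {ε : ℝ} {x y : ZMod N} (h1 : x ≠ y - 1) (h2 : x ≠ y + 1) :
    Kcirc N ε x y = 0 := by
  unfold Kcirc
  rw [Matrix.of_apply]
  rw [if_neg, if_neg, if_neg]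
  · rintro (h | h)
    · exact h1 (by linear_combination -h)
    · exact h2 (by linear_combination -h)
  · rintro (⟨hx, hy⟩ | ⟨hx, hy⟩)
    · exact h2 (by linear_combination hx - hy)
    · exact h1 (by linear_combination hx - hy)
  · rintro (⟨hx, hy⟩ | ⟨hx, hy⟩)
    · exact h1 (by linear_combination hx - hy)
    · exact h2 (by linear_combination hx - hy)

lemma Kc_eps1 {N : ℕ} {ε : ℝ} : Kcirc N ε 0 1 = (1 + ε) / (2 + ε) := by
  unfold Kcirc; rw [Matrix.of_apply]; rw [if_pos (Or.inl ⟨rfl, rfl⟩)]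

lemma Kc_eps2 {N : ℕ} {ε : ℝ} : Kcirc N ε 1 0 = (1 + ε) / (2 + ε) := by
  unfold Kcirc; rw [Matrix.of_apply]; rw [if_pos (Or.inr ⟨rfl, rfl⟩)]

lemma Kc_small1 {N : ℕ} {ε : ℝ} (h1 : (1 : ZMod N) ≠ 0) (h2 : (2 : ZMod N) ≠ 0) :
    Kcirc N ε 1 2 = 1 / (2 + ε) := by
  unfold Kcirc; rw [Matrix.of_apply]
  rw [if_neg, if_pos (Or.inr ⟨rfl, rfl⟩)]
  rintro (⟨hx, hy⟩ | ⟨hx, hy⟩)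
  · exact h1 hx
  · exact h2 hy

lemma Kc_small0 {N : ℕ} {ε : ℝ} (h1 : (1 : ZMod N) ≠ 0) (h2 : (2 : ZMod N) ≠ 0) :
    Kcirc N ε 0 (-1) = 1 / (2 + ε) := by
  unfold Kcirc; rw [Matrix.of_apply]
  rw [if_neg, if_pos (Or.inl ⟨rfl, rfl⟩)]
  rintro (⟨hx, hy⟩ | ⟨hx, hy⟩)
  · exact h2 (by linear_combination -hy)
  · exact h1 hx.symm

/-- Section 5, case g(x) = x - 1: explicit invariant measure π̃ of K̃, and the
resulting bound max π̃ ≤ (1+ε) min π̃. -/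
theorem stmt17 (l : ℕ) (hl : 1 ≤ l) (N : ℕ) [NeZero N] (hN : N = 2 * l + 1) (ε : ℝ) (hε : 0 < ε)
    (g : Equiv.Perm (ZMod N)) (hg : ∀ x, g x = x - 1)
    (π : ZMod N → ℝ)
    (hπ : ∀ x, π x =
      if x = 0 then (ε + 1) * (ε + 2) / (ε ^ 2 + 2 * N * ε + 2 * N)
      else if x = 1 then (ε + 2) / (ε ^ 2 + 2 * N * ε + 2 * N)
      else 2 * (1 + ε) / (ε ^ 2 + 2 * N * ε + 2 * N)) :
    (∀ x, 0 < π x) ∧ (∑ x, π x = 1) ∧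
      (∀ y, ∑ x, π x * tilde (Kcirc N ε) g x y = π y) ∧
      (∀ x y : ZMod N, π x ≤ (1 + ε) * π y) := by
  have hN3 : 3 ≤ N := by omega
  have hNR : (0:ℝ) < (N:ℝ) := by exact_mod_cast (by omega : 0 < N)
  have hD : (0:ℝ) < ε ^ 2 + 2 * N * ε + 2 * N := by positivity
  have h2ε : (2:ℝ) + ε ≠ 0 := by linarith
  have hDne : (ε ^ 2 + 2 * (N:ℝ) * ε + 2 * N) ≠ 0 := ne_of_gt hD
  have h1 : (1 : ZMod N) ≠ 0 := by
    intro h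
    have hd : N ∣ 1 := by
      rw [← ZMod.natCast_eq_zero_iff]; exact_mod_cast h
    have := Nat.le_of_dvd one_pos hd; omega
  have h2 : (2 : ZMod N) ≠ 0 := by
    intro h
    have hd : N ∣ 2 := by
      rw [← ZMod.natCast_eq_zero_iff]; exact_mod_cast h
    have := Nat.le_of_dvd (by norm_num) hd; omega
  -- positivity
  have hpos : ∀ x, 0 < π x := by
    intro x; rw [hπ x]; split_ifs <;> positivity
  refine ⟨hpos, ?_, ?_, ?_⟩
  · -- sum = 1
    have h1mem : (1 : ZMod N) ∈ (univ : Finset (ZMod N)).erase 0 :=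
      Finset.mem_erase.mpr ⟨h1, mem_univ 1⟩
    rw [← Finset.add_sum_erase _ π (mem_univ (0 : ZMod N)),
        ← Finset.add_sum_erase _ π h1mem]
    have hconst : ∑ x ∈ ((univ : Finset (ZMod N)).erase 0).erase 1, π x
        = (N - 2 : ℕ) * (2 * (1 + ε) / (ε ^ 2 + 2 * N * ε + 2 * N)) := by
      rw [Finset.sum_congr rfl (fun x hx => ?_), Finset.sum_const, nsmul_eq_mul]
      · congr 1
        rw [Finset.card_erase_of_mem h1mem, Finset.card_erase_of_mem (mem_univ 0),
          Finset.card_univ, ZMod.card]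
        norm_cast
      · simp only [Finset.mem_erase] at hx
        rw [hπ, if_neg hx.2.1, if_neg hx.1]
    rw [hconst, hπ, hπ, if_pos rfl, if_neg h1, if_pos rfl]
    have hcast : ((N - 2 : ℕ) : ℝ) = (N : ℝ) - 2 := by
      rw [Nat.cast_sub (by omega)]; norm_num
    rw [hcast]
    field_simp
    ring
  · -- invariance
    have hsym : ∀ y : ZMod N, g.symm y = y + 1 := by
      intro y; rw [Equiv.symm_apply_eq, hg]; ring
    intro y
    simp only [tilde, Matrix.of_apply, hsym]
    have hne : y ≠ y + 2 := fun h => h2 (by linear_combination -h)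
    have hzero : ∀ x ∈ (univ : Finset (ZMod N)), x ∉ ({y, y + 2} : Finset (ZMod N)) →
        π x * Kcirc N ε x (y + 1) = 0 := by
      intro x _ hx
      simp only [Finset.mem_insert, Finset.mem_singleton, not_or] at hx
      rw [Kc_zero (fun h => hx.1 (by linear_combination h))
        (fun h => hx.2 (by linear_combination h)), mul_zero]
    rw [← Finset.sum_subset (Finset.subset_univ ({y, y + 2} : Finset (ZMod N))) hzero,
      Finset.sum_pair hne]
    by_cases hy0 : y = -1
    · -- z = 0
      subst hy0
      have e1 : (-1 : ZMod N) + 2 = 1 := by ring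
      have e2 : (-1 : ZMod N) + 1 = 0 := by ring
      rw [e1, e2]
      have hm0 : (-1 : ZMod N) ≠ 0 := fun h => h1 (by linear_combination -h)
      have hm1 : (-1 : ZMod N) ≠ 1 := fun h => h2 (by linear_combination -h)
      rw [Kc_half hm0 hm1 (Or.inl (by ring)), Kc_eps2,
        hπ (-1), if_neg hm0, if_neg hm1, hπ 1, if_neg h1, if_pos rfl]
      field_simp; ring
    by_cases hy1 : y = 0
    · -- z = 1
      subst hy1
      have e1 : (0 : ZMod N) + 2 = 2 := by ring
      have e2 : (0 : ZMod N) + 1 = 1 := by ring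
      rw [e1, e2]
      have h20 : (2 : ZMod N) ≠ 0 := h2
      have h21 : (2 : ZMod N) ≠ 1 := fun h => h1 (by linear_combination h)
      rw [Kc_eps1, Kc_half h20 h21 (Or.inr (by ring)),
        hπ 0, if_pos rfl, hπ 2, if_neg h20, if_neg h21]
      field_simp; ring
    by_cases hy2 : y = 1
    · -- z = 2
      subst hy2
      have e1 : (1 : ZMod N) + 2 = 3 := by ring
      have e2 : (1 : ZMod N) + 1 = 2 := by ring
      rw [e1, e2, Kc_small1 h1 h2, hπ 1, if_neg h1, if_pos rfl]
      by_cases h3 : (3 : ZMod N) = 0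
      · have hK : Kcirc N ε 3 2 = 1 / (2 + ε) := by
          unfold Kcirc; rw [Matrix.of_apply]
          rw [if_neg, if_pos (Or.inl ⟨h3, by linear_combination h3⟩)]
          rintro (⟨hx, hy⟩ | ⟨hx, hy⟩)
          · exact h1 (by linear_combination hy)
          · exact h2 hy
        rw [hK, hπ 3, if_pos h3]
        field_simp; ring
      · have h31 : (3 : ZMod N) ≠ 1 := fun h => h2 (by linear_combination h)
        rw [Kc_half h3 h31 (Or.inr (by ring)), hπ 3, if_neg h3, if_neg h31]
        field_simp; ring
    by_cases hym2 : y = -2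
    · -- z = -1
      subst hym2
      have h3 : (3 : ZMod N) ≠ 0 := fun h => hy2 (by linear_combination -h)
      have e1 : (-2 : ZMod N) + 2 = 0 := by ring
      have e2 : (-2 : ZMod N) + 1 = -1 := by ring
      rw [e1, e2]
      have hm20 : (-2 : ZMod N) ≠ 0 := fun h => h2 (by linear_combination -h)
      have hm21 : (-2 : ZMod N) ≠ 1 := fun h => h3 (by linear_combination -h)
      rw [Kc_half hm20 hm21 (Or.inl (by ring)), Kc_small0 h1 h2,
        hπ (-2), if_neg hm20, if_neg hm21, hπ 0, if_pos rfl]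
      field_simp; ring
    · -- generic
      have hy0' : y ≠ 0 := hy1
      have hy1' : y ≠ 1 := hy2
      have hp0 : y + 2 ≠ 0 := fun h => hym2 (by linear_combination h)
      have hp1 : y + 2 ≠ 1 := fun h => hy0 (by linear_combination h)
      rw [Kc_half hy0' hy1' (Or.inl rfl), Kc_half hp0 hp1 (Or.inr (by ring)),
        hπ y, if_neg hy0', if_neg hy1', hπ (y + 2), if_neg hp0, if_neg hp1]
      ring
  · -- ratio bound
    intro x y
    rw [hπ x, hπ y]
    split_ifs <;>
      · rw [← mul_div_assoc, div_le_div_iff_of_pos_right hD]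
        nlinarith [hε.le]
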